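/- arXiv:2510.08701 — 3 statements merged into one kernel-verified Lean document; each statement's English description precedes it below -/
import Mathlib

section
/- Let Λ = ⊕_{i≥0} Λ_i be a locally finite ℕ-graded algebra over a field k (each Λ_i finite-dimensional). If f is an algebra automorphism of Λ satisfying f(Λ_n) ⊆ ⊕_{m≥n} Λ_m for every n ∈ ℕ, then there exists a graded algebra automorphism σ of Λ such that for every n and every x ∈ Λ_n, f(x) - σ(x) ∈ ⊕_{m>n} Λ_m (i.e., σ(x) is the degree-n component of f(x)). -/
open DirectSum

section AuxGraded

variable {k Λ : Type*} [Field k] [Ring Λ] [Algebra k Λ]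
variable (𝒜 : ℕ → Submodule k Λ) [GradedAlgebra 𝒜]

/-- Membership in a supremum of graded pieces is characterized by vanishing of the other
homogeneous components. -/
lemma aux_mem_iSup_iff (p : ℕ → Prop) (y : Λ) :
    y ∈ (⨆ m, ⨆ _ : p m, 𝒜 m) ↔ ∀ m, ¬ p m → (decompose 𝒜 y m : Λ) = 0 := by
  classical
  constructor
  · intro hy m hm
    refine Submodule.iSup_induction (motive := fun z => (decompose 𝒜 z m : Λ) = 0) _ hy ?_ ?_ ?_
    · intro i x hx
      by_cases hpi : p i
      · rw [iSup_pos hpi] at hx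
        exact decompose_of_mem_ne 𝒜 hx (fun h => hm (h ▸ hpi))
      · rw [iSup_neg hpi] at hx
        obtain rfl : x = 0 := by simpa using hx
        simp
    · simp
    · intro a b ha hb
      rw [DirectSum.decompose_add, DirectSum.add_apply, Submodule.coe_add, ha, hb, add_zero]
  · intro h
    rw [← DirectSum.sum_support_decompose 𝒜 y]
    refine Submodule.sum_mem _ fun i hi => ?_
    have hpi : p i := by
      by_contra hpi
      exact (DFinsupp.mem_support_iff.mp hi) (Subtype.ext (h i hpi))
    exact Submodule.mem_iSup_of_mem i (Submodule.mem_iSup_of_mem hpi (decompose 𝒜 y i).2)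

/-- If `f` respects the filtration and each graded piece is finite dimensional, then `f⁻¹`
also respects the filtration. -/
lemma aux_preimage [∀ i, FiniteDimensional k (𝒜 i)] (f : Λ ≃ₐ[k] Λ)
    (hf : ∀ n : ℕ, (𝒜 n).map f.toLinearMap ≤ ⨆ m ≥ n, 𝒜 m) (n : ℕ)
    (x : Λ) (hx : f x ∈ (⨆ m ≥ n, 𝒜 m : Submodule k Λ)) :
    x ∈ (⨆ m ≥ n, 𝒜 m : Submodule k Λ) := by
  classical
  set V : Submodule k Λ := ⨆ m ≥ n, 𝒜 m with hV
  have hfV : V.map f.toLinearMap ≤ V := by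
    rw [hV, Submodule.map_iSup]
    refine iSup_le fun m => ?_
    rw [Submodule.map_iSup]
    refine iSup_le fun hm => ?_
    refine le_trans (hf m) (iSup₂_le fun j hj => ?_)
    exact le_iSup₂ (f := fun j _ => 𝒜 j) j (le_trans hm hj)
  have hsup : (⨆ m, ⨆ _ : m < n, 𝒜 m) ⊔ V = ⊤ := by
    rw [eq_top_iff]
    intro y _
    rw [← DirectSum.sum_support_decompose 𝒜 y]
    refine Submodule.sum_mem _ fun i _ => ?_
    by_cases hi : i < n
    · exact Submodule.mem_sup_left
        (Submodule.mem_iSup_of_mem i (Submodule.mem_iSup_of_mem hi (decompose 𝒜 y i).2))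
    · exact Submodule.mem_sup_right
        (Submodule.mem_iSup_of_mem i
          (Submodule.mem_iSup_of_mem (le_of_not_gt hi) (decompose 𝒜 y i).2))
  have efin : (⨆ m, ⨆ _ : m < n, 𝒜 m : Submodule k Λ) = ⨆ i : Fin n, 𝒜 i :=
    le_antisymm (iSup₂_le fun m hm => le_iSup (fun i : Fin n => 𝒜 (i : ℕ)) ⟨m, hm⟩)
      (iSup_le fun i => le_iSup₂ (f := fun (m : ℕ) (_ : m < n) => 𝒜 m) (i : ℕ) i.2)
  have hfdlt : FiniteDimensional k (⨆ m, ⨆ _ : m < n, 𝒜 m : Submodule k Λ) := by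
    rw [efin]; infer_instance
  have hfd : FiniteDimensional k (Λ ⧸ V) := by
    refine FiniteDimensional.of_surjective
      (V.mkQ ∘ₗ (⨆ m, ⨆ _ : m < n, 𝒜 m : Submodule k Λ).subtype) ?_
    intro q
    obtain ⟨z, rfl⟩ := V.mkQ_surjective q
    have hz : z ∈ (⨆ m, ⨆ _ : m < n, 𝒜 m) ⊔ V := hsup ▸ Submodule.mem_top
    obtain ⟨a, ha, v, hv, rfl⟩ := Submodule.mem_sup.mp hz
    refine ⟨⟨a, ha⟩, ?_⟩
    simp [Submodule.Quotient.mk_add, (Submodule.Quotient.mk_eq_zero V).mpr hv]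
  have hle : V ≤ LinearMap.ker (V.mkQ ∘ₗ f.toLinearMap) := by
    intro v hv
    simp only [LinearMap.mem_ker, LinearMap.comp_apply, Submodule.mkQ_apply]
    exact (Submodule.Quotient.mk_eq_zero V).mpr (hfV ⟨v, hv, rfl⟩)
  set g := Submodule.liftQ V (V.mkQ ∘ₗ f.toLinearMap) hle with hg
  have hgs : Function.Surjective g := by
    intro q
    obtain ⟨z, rfl⟩ := V.mkQ_surjective q
    obtain ⟨w, hw⟩ := f.surjective z
    exact ⟨V.mkQ w, by simp [hg, hw]⟩
  have hgi : Function.Injective g := LinearMap.injective_iff_surjective.mpr hgs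
  have h0 : g (V.mkQ x) = g 0 := by
    rw [map_zero]
    simpa [hg] using (Submodule.Quotient.mk_eq_zero V).mpr hx
  have := hgi h0
  rwa [← Submodule.Quotient.mk_eq_zero V]

/-- The degree-`n` component of `f` restricted to `𝒜 n`. -/
noncomputable def compMap (f : Λ ≃ₐ[k] Λ) (n : ℕ) : 𝒜 n →ₗ[k] 𝒜 n :=
  (DirectSum.component k ℕ (fun i => 𝒜 i) n) ∘ₗ (decomposeLinearEquiv 𝒜).toLinearMap ∘ₗ
    f.toLinearMap ∘ₗ (𝒜 n).subtype

lemma compMap_bijective [∀ i, FiniteDimensional k (𝒜 i)] (f : Λ ≃ₐ[k] Λ)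
    (hf : ∀ n : ℕ, (𝒜 n).map f.toLinearMap ≤ ⨆ m ≥ n, 𝒜 m) (n : ℕ) :
    Function.Bijective (compMap 𝒜 f n) := by
  have hinj : Function.Injective (compMap 𝒜 f n) := by
    rw [injective_iff_map_eq_zero]
    intro x hx0
    have hx0' : (decompose 𝒜 (f x) n : Λ) = 0 := by
      have h : compMap 𝒜 f n x = decompose 𝒜 (f x) n := rfl
      rw [h] at hx0
      exact congrArg Subtype.val hx0
    have h1 : f (x : Λ) ∈ (⨆ m ≥ n, 𝒜 m : Submodule k Λ) := hf n ⟨x, x.2, rfl⟩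
    have h2 : f (x : Λ) ∈ (⨆ m ≥ n + 1, 𝒜 m : Submodule k Λ) := by
      rw [aux_mem_iSup_iff] at h1 ⊢
      intro j hj
      rcases Nat.lt_succ_iff_lt_or_eq.mp (not_le.mp hj) with hlt | rfl
      · exact h1 j (not_le.mpr hlt)
      · exact hx0'
    have h3 : (x : Λ) ∈ (⨆ m ≥ n + 1, 𝒜 m : Submodule k Λ) :=
      aux_preimage 𝒜 f hf (n + 1) x h2
    have h4 : (decompose 𝒜 (x : Λ) n : Λ) = 0 :=
      (aux_mem_iSup_iff 𝒜 _ _).mp h3 n (by omega)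
    rw [decompose_of_mem_same 𝒜 x.2] at h4
    exact Subtype.ext h4
  exact ⟨hinj, LinearMap.injective_iff_surjective.mp hinj⟩

lemma aux_mul_mem {a b : ℕ} {x y : Λ} (hx : x ∈ (⨆ m, ⨆ _ : a ≤ m, 𝒜 m : Submodule k Λ))
    (hy : y ∈ (⨆ m, ⨆ _ : b ≤ m, 𝒜 m : Submodule k Λ)) :
    x * y ∈ (⨆ m, ⨆ _ : a + b ≤ m, 𝒜 m : Submodule k Λ) := by
  refine Submodule.iSup_induction
    (motive := fun x => x * y ∈ (⨆ m, ⨆ _ : a + b ≤ m, 𝒜 m : Submodule k Λ))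
    _ hx ?_ (by simp) (fun u v hu hv => by beta_reduce; rw [add_mul]; exact add_mem hu hv)
  intro i z hz
  by_cases hia : a ≤ i
  · rw [iSup_pos hia] at hz
    refine Submodule.iSup_induction
      (motive := fun y => z * y ∈ (⨆ m, ⨆ _ : a + b ≤ m, 𝒜 m : Submodule k Λ))
      _ hy ?_ (by simp) (fun u v hu hv => by beta_reduce; rw [mul_add]; exact add_mem hu hv)
    intro j w hw
    by_cases hjb : b ≤ j
    · rw [iSup_pos hjb] at hw
      exact Submodule.mem_iSup_of_mem (i + j)
        (Submodule.mem_iSup_of_mem (by omega) (SetLike.mul_mem_graded hz hw))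
    · rw [iSup_neg hjb] at hw
      obtain rfl : w = 0 := by simpa using hw
      simp
  · rw [iSup_neg hia] at hz
    obtain rfl : z = 0 := by simpa using hz
    simp

/-- The candidate graded automorphism, as a linear equivalence. -/
noncomputable def sigmaL (f : Λ ≃ₐ[k] Λ)
    (hbij : ∀ n, Function.Bijective (compMap 𝒜 f n)) : Λ ≃ₗ[k] Λ :=
  (decomposeLinearEquiv 𝒜) ≪≫ₗ
    (DFinsupp.mapRange.linearEquiv fun n => LinearEquiv.ofBijective (compMap 𝒜 f n) (hbij n)) ≪≫ₗ
    (decomposeLinearEquiv 𝒜).symm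

lemma sigmaL_apply_of_mem (f : Λ ≃ₐ[k] Λ)
    (hbij : ∀ n, Function.Bijective (compMap 𝒜 f n)) {n : ℕ} {x : Λ} (hx : x ∈ 𝒜 n) :
    sigmaL 𝒜 f hbij x = (decompose 𝒜 (f x) n : Λ) := by
  have h1 : decompose 𝒜 x = DirectSum.of (fun i => (𝒜 i : Type _)) n ⟨x, hx⟩ :=
    decompose_of_mem 𝒜 hx
  show (decomposeLinearEquiv 𝒜).symm
      (DFinsupp.mapRange.linearEquiv _ (decomposeLinearEquiv 𝒜 x)) = _
  rw [decomposeLinearEquiv_apply, h1]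
  rw [DFinsupp.mapRange.linearEquiv_apply]
  have h2 : DirectSum.of (fun i => (𝒜 i : Type _)) n ⟨x, hx⟩ =
      DFinsupp.single n ⟨x, hx⟩ := rfl
  rw [h2, DFinsupp.mapRange_single]
  have h3 : (DFinsupp.single n ((LinearEquiv.ofBijective (compMap 𝒜 f n) (hbij n)) ⟨x, hx⟩) :
      ⨁ i, 𝒜 i) = DirectSum.of (fun i => (𝒜 i : Type _)) n (compMap 𝒜 f n ⟨x, hx⟩) := rfl
  rw [h3, decomposeLinearEquiv_symm_apply, decompose_symm_of]
  rfl

lemma sigmaL_mul_homog (f : Λ ≃ₐ[k] Λ)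
    (hf : ∀ n : ℕ, (𝒜 n).map f.toLinearMap ≤ ⨆ m ≥ n, 𝒜 m)
    (hbij : ∀ n, Function.Bijective (compMap 𝒜 f n)) {n m : ℕ} {x y : Λ}
    (hx : x ∈ 𝒜 n) (hy : y ∈ 𝒜 m) :
    sigmaL 𝒜 f hbij (x * y) = sigmaL 𝒜 f hbij x * sigmaL 𝒜 f hbij y := by
  have hxy : x * y ∈ 𝒜 (n + m) := SetLike.mul_mem_graded hx hy
  rw [sigmaL_apply_of_mem 𝒜 f hbij hxy, sigmaL_apply_of_mem 𝒜 f hbij hx,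
    sigmaL_apply_of_mem 𝒜 f hbij hy]
  set px : Λ := (decompose 𝒜 (f x) n : Λ) with hpxdef
  set py : Λ := (decompose 𝒜 (f y) m : Λ) with hpydef
  have hpx : px ∈ 𝒜 n := (decompose 𝒜 (f x) n).2
  have hpy : py ∈ 𝒜 m := (decompose 𝒜 (f y) m).2
  have hfx : f x ∈ (⨆ j ≥ n, 𝒜 j : Submodule k Λ) := hf n ⟨x, hx, rfl⟩
  have hfy : f y ∈ (⨆ j ≥ m, 𝒜 j : Submodule k Λ) := hf m ⟨y, hy, rfl⟩
  have hrx : f x - px ∈ (⨆ j ≥ n + 1, 𝒜 j : Submodule k Λ) := by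
    rw [aux_mem_iSup_iff]
    intro j hj
    rw [decompose_sub, DirectSum.sub_apply, Submodule.coe_sub]
    rcases Nat.lt_succ_iff_lt_or_eq.mp (not_le.mp hj) with hlt | rfl
    · rw [(aux_mem_iSup_iff 𝒜 _ _).mp hfx j (not_le.mpr hlt),
        decompose_of_mem_ne 𝒜 hpx (by omega : n ≠ j), sub_zero]
    · rw [decompose_of_mem_same 𝒜 hpx, hpxdef, sub_self]
  have hry : f y - py ∈ (⨆ j ≥ m + 1, 𝒜 j : Submodule k Λ) := by
    rw [aux_mem_iSup_iff]
    intro j hj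
    rw [decompose_sub, DirectSum.sub_apply, Submodule.coe_sub]
    rcases Nat.lt_succ_iff_lt_or_eq.mp (not_le.mp hj) with hlt | rfl
    · rw [(aux_mem_iSup_iff 𝒜 _ _).mp hfy j (not_le.mpr hlt),
        decompose_of_mem_ne 𝒜 hpy (by omega : m ≠ j), sub_zero]
    · rw [decompose_of_mem_same 𝒜 hpy, hpydef, sub_self]
  have hexp : f (x * y) - px * py = (f x - px) * f y + px * (f y - py) := by
    rw [map_mul]
    noncomm_ring
  have h1 : (f x - px) * f y ∈ (⨆ j, ⨆ _ : n + 1 + m ≤ j, 𝒜 j : Submodule k Λ) :=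
    aux_mul_mem 𝒜 hrx hfy
  have h2 : px * (f y - py) ∈ (⨆ j, ⨆ _ : n + (m + 1) ≤ j, 𝒜 j : Submodule k Λ) :=
    aux_mul_mem 𝒜 (Submodule.mem_iSup_of_mem n (Submodule.mem_iSup_of_mem (le_refl n) hpx)) hry
  have e1 : n + 1 + m = n + m + 1 := by omega
  have e2 : n + (m + 1) = n + m + 1 := by omega
  rw [e1] at h1
  rw [e2] at h2
  have hr : f (x * y) - px * py ∈ (⨆ j, ⨆ _ : n + m + 1 ≤ j, 𝒜 j : Submodule k Λ) := by
    rw [hexp]; exact add_mem h1 h2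
  have hz : (decompose 𝒜 (f (x * y) - px * py) (n + m) : Λ) = 0 :=
    (aux_mem_iSup_iff 𝒜 _ _).mp hr (n + m) (by omega)
  rw [decompose_sub, DirectSum.sub_apply, Submodule.coe_sub, sub_eq_zero] at hz
  rw [hz, decompose_of_mem_same 𝒜 (SetLike.mul_mem_graded hpx hpy)]

end AuxGraded

/-- If `Λ` is a locally finite ℕ-graded algebra over a field `k` and `f` is an
algebra automorphism with `f(Λ_n) ⊆ Λ_{≥ n}` for all `n`, then there is a graded algebra
automorphism `σ` with `f x - σ x ∈ Λ_{> n}` for every homogeneous `x` of degree `n`. -/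
theorem stmt0 {k Λ : Type*} [Field k] [Ring Λ] [Algebra k Λ]
    (𝒜 : ℕ → Submodule k Λ) [GradedAlgebra 𝒜]
    [∀ i, FiniteDimensional k (𝒜 i)]
    (f : Λ ≃ₐ[k] Λ)
    (hf : ∀ n : ℕ, (𝒜 n).map f.toLinearMap ≤ ⨆ m ≥ n, 𝒜 m) :
    ∃ σ : Λ ≃ₐ[k] Λ,
      (∀ n : ℕ, (𝒜 n).map σ.toLinearMap = 𝒜 n) ∧
      ∀ n : ℕ, ∀ x ∈ 𝒜 n, f x - σ x ∈ (⨆ m > n, 𝒜 m : Submodule k Λ) := by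
  have hbij : ∀ n, Function.Bijective (compMap 𝒜 f n) := compMap_bijective 𝒜 f hf
  set σL : Λ ≃ₗ[k] Λ := sigmaL 𝒜 f hbij with hσL
  have hone : σL 1 = 1 := by
    rw [hσL, sigmaL_apply_of_mem 𝒜 f hbij (SetLike.one_mem_graded 𝒜), map_one,
      decompose_of_mem_same 𝒜 (SetLike.one_mem_graded 𝒜)]
  have hmul : ∀ a b : Λ, σL (a * b) = σL a * σL b := by
    intro a
    refine DirectSum.Decomposition.inductionOn 𝒜
      (motive := fun a => ∀ b : Λ, σL (a * b) = σL a * σL b) ?_ ?_ ?_ a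
    · intro b; simp
    · rintro i ⟨xi, hxi⟩ b
      refine DirectSum.Decomposition.inductionOn 𝒜
        (motive := fun b => σL (xi * b) = σL xi * σL b) ?_ ?_ ?_ b
      · simp
      · rintro j ⟨yj, hyj⟩
        exact sigmaL_mul_homog 𝒜 f hf hbij hxi hyj
      · intro c d hc hd
        rw [mul_add, map_add, hc, hd, map_add, mul_add]
    · intro c d hc hd b
      rw [add_mul, map_add, hc b, hd b, map_add, add_mul]
  refine ⟨AlgEquiv.ofLinearEquiv σL hone hmul, ?_, ?_⟩
  · intro n
    apply le_antisymm
    · rintro _ ⟨x, hx, rfl⟩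
      show σL x ∈ 𝒜 n
      rw [hσL, sigmaL_apply_of_mem 𝒜 f hbij hx]
      exact (decompose 𝒜 (f x) n).2
    · intro y hy
      obtain ⟨x, hxeq⟩ := (hbij n).2 ⟨y, hy⟩
      refine ⟨x, x.2, ?_⟩
      show σL (x : Λ) = y
      rw [hσL, sigmaL_apply_of_mem 𝒜 f hbij x.2]
      have : compMap 𝒜 f n x = decompose 𝒜 (f (x : Λ)) n := rfl
      rw [← this, hxeq]
  · intro n x hx
    show f x - σL x ∈ _
    rw [hσL, sigmaL_apply_of_mem 𝒜 f hbij hx]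
    rw [aux_mem_iSup_iff]
    intro j hj
    have hjn : j ≤ n := not_lt.mp hj
    rw [decompose_sub, DirectSum.sub_apply, Submodule.coe_sub]
    have hfx : f x ∈ (⨆ m ≥ n, 𝒜 m : Submodule k Λ) := hf n ⟨x, hx, rfl⟩
    rcases eq_or_lt_of_le hjn with rfl | hlt
    · rw [decompose_of_mem_same 𝒜 (decompose 𝒜 (f x) j).2, sub_self]
    · rw [(aux_mem_iSup_iff 𝒜 _ _).mp hfx j (not_le.mpr hlt),
        decompose_of_mem_ne 𝒜 (decompose 𝒜 (f x) n).2 (by omega : n ≠ j), sub_zero]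
end

section
/- Let Λ be an ℕ-graded algebra, graded by path length as a homogeneous quotient of the path algebra of a finite quiver, such that every loop of the quiver is nilpotent in Λ. Then every algebra automorphism f of Λ satisfies f(Λ_n) ⊆ ⊕_{m≥n} Λ_m for all n ∈ ℕ; in particular f preserves the graded Jacobson radical Λ_+ = ⊕_{m>0} Λ_m. -/
/-- Let `Λ` (here `A`) be an ℕ-graded algebra, graded by path length as a
homogeneous quotient of the path algebra of a finite quiver (encoded by the orthogonal
idempotents `e v` spanning degree 0, arrows `ar β` of degree 1 with sources `s` and
targets `t`, and degree `n+1` spanned by products arrow · (degree-`n` element)).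
If every loop of the quiver is nilpotent in `A`, then every algebra automorphism `f`
satisfies `f(A_n) ⊆ A_{≥ n}` for all `n`; in particular `f` preserves the graded Jacobson
radical `A_+ = ⨆ m > 0, A_m`. -/
theorem stmt1 {k A V E : Type*} [Field k] [Ring A] [Algebra k A]
    [Fintype V] [DecidableEq V]
    (𝒜 : ℕ → Submodule k A) [GradedAlgebra 𝒜]
    (s t : E → V) (e : V → A) (ar : E → A)
    (horth : ∀ v w, e v * e w = if v = w then e v else 0)
    (hsum : ∑ v, e v = 1)
    (hsrc : ∀ β, e (s β) * ar β = ar β)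
    (htgt : ∀ β, ar β * e (t β) = ar β)
    (h0 : 𝒜 0 = Submodule.span k (Set.range e))
    (h1 : ∀ β, ar β ∈ 𝒜 1)
    (hgen : ∀ n : ℕ, 𝒜 (n + 1) ≤
      Submodule.span k {x | ∃ (β : E) (y : A), y ∈ 𝒜 n ∧ x = ar β * y})
    (hloop : ∀ β, s β = t β → IsNilpotent (ar β)) :
    ∀ f : A ≃ₐ[k] A,
      (∀ n : ℕ, (𝒜 n).map f.toLinearMap ≤ ⨆ m ≥ n, 𝒜 m) ∧
      (⨆ m > 0, 𝒜 m : Submodule k A).map f.toLinearMap ≤ ⨆ m > 0, 𝒜 m := by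
  classical
  intro f
  let π : A →+* A := GradedRing.projZeroRingHom 𝒜
  have hπapp : ∀ x : A, π x = (DirectSum.decompose 𝒜 x 0 : A) := fun _ => rfl
  have hπ0 : ∀ x : A, π x ∈ 𝒜 0 := fun x => by
    rw [hπapp]; exact SetLike.coe_mem _
  have hπsmul : ∀ (c : k) (x : A), π (c • x) = c • π x := by
    intro c x
    rw [hπapp, hπapp, DirectSum.decompose_smul]
    rfl
  -- membership in upper truncation from vanishing of low components
  have L2 : ∀ (n : ℕ) (z : A), (∀ m, m < n → (DirectSum.decompose 𝒜 z m : A) = 0) →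
      z ∈ ⨆ m ≥ n, 𝒜 m := by
    intro n z hz
    rw [← DirectSum.sum_support_decompose 𝒜 z]
    refine Submodule.sum_mem _ fun m _ => ?_
    rcases lt_or_ge m n with h | h
    · rw [hz m h]; exact Submodule.zero_mem _
    · exact Submodule.mem_iSup_of_mem m (Submodule.mem_iSup_of_mem h (SetLike.coe_mem _))
  -- multiplicativity of truncations
  have L3 : ∀ (i j : ℕ) (a b : A), a ∈ (⨆ m ≥ i, 𝒜 m) → b ∈ (⨆ m ≥ j, 𝒜 m) →
      a * b ∈ ⨆ m ≥ i + j, 𝒜 m := by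
    intro i j a b ha hb
    refine Submodule.iSup_induction (x := a) _ (motive := fun a => a * b ∈ ⨆ m ≥ i + j, 𝒜 m) ha ?_ ?_ ?_
    · intro p x hx
      rcases le_or_gt i p with hip | hip
      · rw [iSup_pos hip] at hx
        refine Submodule.iSup_induction (x := b) _
          (motive := fun b => x * b ∈ ⨆ m ≥ i + j, 𝒜 m) hb ?_ ?_ ?_
        · intro q y hy
          rcases le_or_gt j q with hjq | hjq
          · rw [iSup_pos hjq] at hy
            exact Submodule.mem_iSup_of_mem (p + q)
              (Submodule.mem_iSup_of_mem (add_le_add hip hjq) (SetLike.mul_mem_graded hx hy))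
          · rw [iSup_neg (by omega)] at hy
            show x * y ∈ _
            rw [(Submodule.mem_bot k).mp hy, mul_zero]
            exact Submodule.zero_mem _
        · show x * (0:A) ∈ _
          rw [mul_zero]; exact Submodule.zero_mem _
        · intro u v hu hv
          show x * (u + v) ∈ _
          rw [mul_add]; exact Submodule.add_mem _ hu hv
      · rw [iSup_neg (by omega)] at hx
        show x * b ∈ _
        rw [(Submodule.mem_bot k).mp hx, zero_mul]
        exact Submodule.zero_mem _
    · show (0:A) * b ∈ _
      rw [zero_mul]; exact Submodule.zero_mem _
    · intro u v hu hv
      show (u + v) * b ∈ _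
      rw [add_mul]; exact Submodule.add_mem _ hu hv
  -- commutativity of degree-0 part
  have hgencomm : ∀ (v : V) (y : A), y ∈ Submodule.span k (Set.range e) → e v * y = y * e v := by
    intro v y hy
    induction hy using Submodule.span_induction with
    | mem z hz =>
      obtain ⟨w, rfl⟩ := hz
      rw [horth, horth]
      by_cases h : v = w
      · subst h; simp
      · rw [if_neg h, if_neg (Ne.symm h)]
    | zero => simp
    | add a b _ _ ha hb => rw [mul_add, add_mul, ha, hb]
    | smul c a _ ha => rw [mul_smul_comm, smul_mul_assoc, ha]
  have hcomm : ∀ x ∈ 𝒜 0, ∀ y ∈ 𝒜 0, x * y = y * x := by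
    rw [h0]
    intro x hx y hy
    induction hx using Submodule.span_induction with
    | mem z hz =>
      obtain ⟨v, rfl⟩ := hz
      exact hgencomm v y hy
    | zero => simp
    | add a b _ _ ha hb => rw [add_mul, mul_add, ha, hb]
    | smul c a _ ha => rw [smul_mul_assoc, mul_smul_comm, ha]
  -- degree-0 part is reduced
  have hered : ∀ x ∈ 𝒜 0, IsNilpotent x → x = 0 := by
    intro x hx hnil
    have hx' : x ∈ Submodule.span k (Set.range e) := h0 ▸ hx
    have hspan : ∀ y ∈ Submodule.span k (Set.range e), ∀ v, y * e v ∈ Submodule.span k {e v} := by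
      intro y hy v
      induction hy using Submodule.span_induction with
      | mem z hz =>
        obtain ⟨w, rfl⟩ := hz
        rw [horth]
        by_cases h : w = v
        · subst h; rw [if_pos rfl]; exact Submodule.mem_span_singleton_self _
        · rw [if_neg h]; exact Submodule.zero_mem _
      | zero => rw [zero_mul]; exact Submodule.zero_mem _
      | add a b _ _ ha hb => rw [add_mul]; exact Submodule.add_mem _ ha hb
      | smul c a _ ha => rw [smul_mul_assoc]; exact Submodule.smul_mem _ _ ha
    obtain ⟨m, hm⟩ := hnil
    have key : ∀ v, x * e v = 0 := by
      intro v
      obtain ⟨c, hc⟩ := Submodule.mem_span_singleton.mp (hspan x hx' v)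
      have pow : ∀ p : ℕ, x ^ p * e v = c ^ p • e v := by
        intro p
        induction p with
        | zero => simp
        | succ p ih =>
          rw [pow_succ, mul_assoc, ← hc, mul_smul_comm, ih, smul_smul, ← pow_succ']
      have h0' : c ^ m • e v = 0 := by rw [← pow m, hm, zero_mul]
      by_cases hc0 : c = 0
      · rw [← hc, hc0, zero_smul]
      · have hev : e v = 0 := (smul_eq_zero.mp h0').resolve_left (pow_ne_zero m hc0)
        rw [← hc, hev, smul_zero]
    calc x = x * 1 := (mul_one x).symm
      _ = ∑ v, x * e v := by rw [← hsum, Finset.mul_sum]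
      _ = 0 := by simp [key]
  -- the projection of the image of each arrow vanishes
  have hg0 : ∀ β, π (f (ar β)) = 0 := by
    intro β
    by_cases hst : s β = t β
    · have hnil : IsNilpotent (f (ar β)) := (hloop β hst).map f
      exact hered _ (hπ0 _) (hnil.map π)
    · have h2 : f (e (s β)) * f (ar β) = f (ar β) := by rw [← map_mul, hsrc]
      have h3 : f (ar β) * f (e (t β)) = f (ar β) := by rw [← map_mul, htgt]
      have h4 : f (e (s β)) * f (e (t β)) = 0 := by
        rw [← map_mul, horth, if_neg hst, map_zero]
      calc π (f (ar β)) = π (f (e (s β)) * (f (ar β) * f (e (t β)))) := by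
            rw [h3, h2]
        _ = π (f (e (s β))) * (π (f (ar β)) * π (f (e (t β)))) := by
            rw [map_mul, map_mul]
        _ = π (f (e (s β))) * (π (f (e (t β))) * π (f (ar β))) := by
            rw [hcomm _ (hπ0 _) _ (hπ0 _)]
        _ = (π (f (e (s β))) * π (f (e (t β)))) * π (f (ar β)) := by
            rw [mul_assoc]
        _ = π (f (e (s β)) * f (e (t β))) * π (f (ar β)) := by rw [map_mul]
        _ = 0 := by rw [h4, map_zero, zero_mul]
  -- positive-degree elements are killed by the projection after f
  have hker1 : ∀ (n : ℕ) (x : A), x ∈ 𝒜 (n + 1) → π (f x) = 0 := by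
    intro n x hx
    have hx' := hgen n hx
    clear hx
    induction hx' using Submodule.span_induction with
    | mem z hz =>
      obtain ⟨β, y, hy, rfl⟩ := hz
      rw [map_mul, map_mul, hg0 β, zero_mul]
    | zero => rw [map_zero, map_zero]
    | add a b _ _ ha hb => rw [map_add, map_add, ha, hb, add_zero]
    | smul c a _ ha => rw [map_smul, hπsmul, ha, smul_zero]
  have hker : ∀ x ∈ (⨆ m > 0, 𝒜 m : Submodule k A), π (f x) = 0 := by
    intro x hx
    refine Submodule.iSup_induction (x := x) _ (motive := fun x => π (f x) = 0) hx ?_ ?_ ?_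
    · intro m z hz
      show π (f z) = 0
      rcases Nat.eq_zero_or_pos m with h | h
      · subst h
        rw [iSup_neg (lt_irrefl 0)] at hz
        rw [(Submodule.mem_bot k).mp hz, map_zero, map_zero]
      · rw [iSup_pos h] at hz
        obtain ⟨p, rfl⟩ := Nat.exists_eq_succ_of_ne_zero (Nat.pos_iff_ne_zero.mp h)
        exact hker1 p z hz
    · show π (f 0) = 0
      rw [map_zero, map_zero]
    · intro u v hu hv
      show π (f (u + v)) = 0
      rw [map_add, map_add, hu, hv, add_zero]
  have heq : (⨆ m > 0, 𝒜 m : Submodule k A) = ⨆ m ≥ 1, 𝒜 m := rfl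
  -- main claim
  have main : ∀ (n : ℕ) (x : A), x ∈ 𝒜 n → f x ∈ ⨆ m ≥ n, 𝒜 m := by
    intro n
    induction n with
    | zero =>
      intro x _
      exact L2 0 _ (fun m hm => absurd hm (Nat.not_lt_zero m))
    | succ n ih =>
      intro x hx
      have hx' := hgen n hx
      clear hx
      induction hx' using Submodule.span_induction with
      | mem z hz =>
        obtain ⟨β, y, hy, rfl⟩ := hz
        rw [map_mul]
        have ha1 : f (ar β) ∈ ⨆ m ≥ 1, 𝒜 m := by
          refine L2 1 _ (fun m hm => ?_)
          interval_cases m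
          exact hg0 β
        have hb1 : f y ∈ ⨆ m ≥ n, 𝒜 m := ih y hy
        have := L3 1 n _ _ ha1 hb1
        rwa [add_comm 1 n] at this
      | zero => rw [map_zero]; exact Submodule.zero_mem _
      | add a b _ _ ha hb => rw [map_add]; exact Submodule.add_mem _ ha hb
      | smul c a _ ha => rw [map_smul]; exact Submodule.smul_mem _ _ ha
  constructor
  · intro n
    rintro _ ⟨x, hx, rfl⟩
    exact main n x hx
  · rintro _ ⟨x, hx, rfl⟩
    rw [heq]
    refine L2 1 _ (fun m hm => ?_)
    interval_cases m
    exact hker x hx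
end

section
/- Let A = kQ/I be a (locally) string algebra with at least one arrow α such that αAα ≠ 0. Then there exists a homogeneous central element z of positive degree (the sum of all rotations of the cycle γ_r(α)) such that the k-subspace αAα is spanned by { α z^k : k > 0 }. -/
def swWord {E : Type*} (f : ℕ → E) (i n : ℕ) : List E :=
  (List.range n).map (fun j => f (i + j))

lemma swWord_length {E : Type*} (f : ℕ → E) (i n : ℕ) : (swWord f i n).length = n := by
  simp [swWord]

lemma swWord_cons {E : Type*} (f : ℕ → E) (i n : ℕ) :
    swWord f i (n + 1) = f i :: swWord f (i + 1) n := by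
  simp [swWord, List.range_succ_eq_map, List.map_map, Function.comp]
  intro a _; congr 1; omega

lemma swWord_snoc {E : Type*} (f : ℕ → E) (i n : ℕ) :
    swWord f i (n + 1) = swWord f i n ++ [f (i + n)] := by
  simp [swWord, List.range_succ]

lemma swWord_append {E : Type*} (f : ℕ → E) (i m n : ℕ) :
    swWord f i (m + n) = swWord f i m ++ swWord f (i + m) n := by
  simp [swWord, List.range_add, List.map_map, Function.comp]
  intro a _; congr 1; omega

lemma swWord_congr {E : Type*} (f : ℕ → E) (i j n : ℕ) (h : ∀ m, f (i + m) = f (j + m)) :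
    swWord f i n = swWord f j n := by
  simp only [swWord]
  apply List.map_congr_left; intro x _; exact h x

lemma swWord_one {E : Type*} (f : ℕ → E) (i : ℕ) : swWord f i 1 = [f i] := by
  simp [swWord, List.range_succ]

lemma swWord_two {E : Type*} (f : ℕ → E) (i : ℕ) :
    swWord f i 2 = [f i, f (i + 1)] := by
  rw [show (2:ℕ) = 1 + 1 from rfl, swWord_cons, swWord_cons]
  simp [swWord]

theorem stmt19 {k A V E : Type*} [Field k] [Ring A] [Algebra k A]
    [Fintype V] [DecidableEq V] [Fintype E]
    (s t : E → V) (e : V → A) (ar : E → A)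
    (horth : ∀ v w, e v * e w = if v = w then e v else 0)
    (hsum : ∑ v, e v = 1)
    (hsrc : ∀ β, e (s β) * ar β = ar β)
    (htgt : ∀ β, ar β * e (t β) = ar β)
    (hspan : Submodule.span k (Set.range
      (Sum.elim e (fun l : {l : List E // l ≠ []} => (l.1.map ar).prod))) = ⊤)
    (hli : LinearIndependent k
      (fun i : {i : V ⊕ {l : List E // l ≠ []} //
          Sum.elim e (fun l : {l : List E // l ≠ []} => (l.1.map ar).prod) i ≠ 0} =>
        Sum.elim e (fun l : {l : List E // l ≠ []} => (l.1.map ar).prod) i.1))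
    (hout : ∀ β₁ β₂ β₃ : E, s β₁ = s β₂ → s β₂ = s β₃ → β₁ = β₂ ∨ β₁ = β₃ ∨ β₂ = β₃)
    (hin : ∀ β₁ β₂ β₃ : E, t β₁ = t β₂ → t β₂ = t β₃ → β₁ = β₂ ∨ β₁ = β₃ ∨ β₂ = β₃)
    (hstr1 : ∀ α β β' : E, β ≠ β' → t β = s α → t β' = s α →
      ar β * ar α = 0 ∨ ar β' * ar α = 0)
    (hstr2 : ∀ α β β' : E, β ≠ β' → t α = s β → t α = s β' →
      ar α * ar β = 0 ∨ ar α * ar β' = 0)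
    (a0 : E) (hx : ∃ x : A, ar a0 * x * ar a0 ≠ 0) :
    ∃ (z : A) (d : ℕ), 0 < d ∧
      (∀ x : A, z * x = x * z) ∧
      z ∈ Submodule.span k {y : A | ∃ l : List E, l.length = d ∧ y = (l.map ar).prod} ∧
      Submodule.span k {y : A | ∃ j : ℕ, 0 < j ∧ y = ar a0 * z ^ j} =
        Submodule.span k {y : A | ∃ x : A, y = ar a0 * x * ar a0} := by
  classical
  -- product notation helpers
  have pw_append : ∀ l1 l2 : List E,
      ((l1 ++ l2).map ar).prod = (l1.map ar).prod * (l2.map ar).prod := by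
    intro l1 l2; rw [List.map_append, List.prod_append]
  have pw_cons : ∀ (β : E) (l : List E),
      ((β :: l).map ar).prod = ar β * (l.map ar).prod := by
    intro β l; rw [List.map_cons, List.prod_cons]
  have pw_single : ∀ β : E, (([β] : List E).map ar).prod = ar β := by
    intro β; simp
  -- basic idempotent interactions
  have mul_e : ∀ (β : E) (v : V), ar β * e v = if t β = v then ar β else 0 := by
    intro β v
    by_cases h : t β = v
    · rw [if_pos h, ← h, htgt]
    · rw [if_neg h]
      calc ar β * e v = (ar β * e (t β)) * e v := by rw [htgt]
        _ = ar β * (e (t β) * e v) := mul_assoc _ _ _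
        _ = 0 := by rw [horth, if_neg h, mul_zero]
  have e_mul : ∀ (v : V) (β : E), e v * ar β = if v = s β then ar β else 0 := by
    intro v β
    by_cases h : v = s β
    · rw [if_pos h, h, hsrc]
    · rw [if_neg h]
      calc e v * ar β = e v * (e (s β) * ar β) := by rw [hsrc]
        _ = (e v * e (s β)) * ar β := (mul_assoc _ _ _).symm
        _ = 0 := by rw [horth, if_neg h, zero_mul]
  have hts : ∀ β δ : E, ar β * ar δ ≠ 0 → t β = s δ := by
    intro β δ h
    by_contra hne
    apply h
    calc ar β * ar δ = ar β * (e (s δ) * ar δ) := by rw [hsrc]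
      _ = (ar β * e (s δ)) * ar δ := (mul_assoc _ _ _).symm
      _ = 0 := by rw [mul_e, if_neg hne, zero_mul]
  -- unique successor
  have hsuccex : ∃ succ : E → E, ∀ β δ, ar β * ar δ ≠ 0 → δ = succ β := by
    refine ⟨fun β => if h : ∃ δ, ar β * ar δ ≠ 0 then h.choose else β, ?_⟩
    intro β δ hδ
    have h : ∃ δ', ar β * ar δ' ≠ 0 := ⟨δ, hδ⟩
    simp only [dif_pos h]
    by_contra hne
    rcases hstr2 β δ h.choose hne (hts _ _ hδ) (hts _ _ h.choose_spec) with h0 | h0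
    · exact hδ h0
    · exact h.choose_spec h0
  obtain ⟨succ, hsucc⟩ := hsuccex
  set seq : ℕ → E := fun n => succ^[n] a0 with hseqdef
  have ha0 : seq 0 = a0 := by simp [hseqdef]
  have hseqsucc : ∀ n, seq (n + 1) = succ (seq n) := by
    intro n; simp [hseqdef, Function.iterate_succ_apply']
  have hsuccu : ∀ (n : ℕ) (β : E), ar (seq n) * ar β ≠ 0 → β = seq (n + 1) := by
    intro n β h
    exact (hsucc _ _ h).trans (hseqsucc n).symm
  have hdet : ∀ i j, seq i = seq j → ∀ m, seq (i + m) = seq (j + m) := by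
    intro i j h m
    simp only [hseqdef] at h ⊢
    rw [add_comm i m, add_comm j m, Function.iterate_add_apply,
      Function.iterate_add_apply, h]
  -- canonical form of nonzero words
  have canon : ∀ (l : List E) (i : ℕ), ((seq i :: l).map ar).prod ≠ 0 →
      seq i :: l = swWord seq i (l.length + 1) := by
    intro l
    induction l with
    | nil =>
      intro i _
      show [seq i] = swWord seq i 1
      rw [swWord_one]
    | cons β l ih =>
      intro i h
      rw [pw_cons] at h
      have htl : ((β :: l).map ar).prod ≠ 0 := by
        intro h0; exact h (by rw [h0, mul_zero])
      have hb : ar (seq i) * ar β ≠ 0 := by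
        intro h0
        apply h
        rw [pw_cons, ← mul_assoc, h0, zero_mul]
      have hβ : β = seq (i + 1) := hsuccu i β hb
      subst hβ
      have := ih (i + 1) htl
      rw [List.length_cons, swWord_cons, ← this]
  -- get a nonzero word from a0 back to a0
  have hpath : ∃ p : List E, ((a0 :: (p ++ [a0])).map ar).prod ≠ 0 := by
    obtain ⟨x, hxa⟩ := hx
    have hexmem : ∃ g ∈ Set.range
        (Sum.elim e (fun l : {l : List E // l ≠ []} => (l.1.map ar).prod)),
        ar a0 * g * ar a0 ≠ 0 := by
      by_contra hc
      push_neg at hc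
      set F : A →ₗ[k] A :=
        (LinearMap.mulLeft k (ar a0)).comp (LinearMap.mulRight k (ar a0)) with hF
      have hFy : ∀ y, F y = ar a0 * y * ar a0 := by
        intro y
        simp [hF, LinearMap.mulLeft_apply, LinearMap.mulRight_apply, mul_assoc]
      have hsub : Set.range
          (Sum.elim e (fun l : {l : List E // l ≠ []} => (l.1.map ar).prod)) ⊆
          ↑(LinearMap.ker F) := by
        intro g hg
        simp only [SetLike.mem_coe, LinearMap.mem_ker, hFy]
        exact hc g hg
      have hxk : x ∈ LinearMap.ker F := by
        have hx1 : x ∈ Submodule.span k (Set.range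
            (Sum.elim e (fun l : {l : List E // l ≠ []} => (l.1.map ar).prod))) := by
          rw [hspan]; trivial
        exact Submodule.span_le.mpr hsub hx1
      exact hxa (by simpa [hFy] using hxk)
    obtain ⟨g, hg, hgne⟩ := hexmem
    obtain ⟨i, rfl⟩ := hg
    cases i with
    | inl v =>
      refine ⟨[], ?_⟩
      simp only [Sum.elim_inl] at hgne
      have hv : t a0 = v := by
        by_contra hne
        exact hgne (by rw [mul_e, if_neg hne, zero_mul])
      have h2 : ar a0 * ar a0 ≠ 0 := by
        intro h0
        apply hgne
        rw [mul_e, if_pos hv, h0]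
      simpa [pw_cons, pw_single] using h2
    | inr l =>
      refine ⟨l.1, ?_⟩
      simp only [Sum.elim_inr] at hgne
      intro h0
      apply hgne
      rw [pw_cons, pw_append, pw_single, ← mul_assoc] at h0
      exact h0
  obtain ⟨p, hw⟩ := hpath
  have hwcanon : a0 :: (p ++ [a0]) = swWord seq 0 (p.length + 2) := by
    have h := canon (p ++ [a0]) 0 (by rw [ha0]; exact hw)
    rw [ha0] at h
    simpa using h
  have hLw : ((swWord seq 0 (p.length + 2)).map ar).prod ≠ 0 := by
    rw [← hwcanon]; exact hw
  -- last-letter extraction lemma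
  have hlastlem : ∀ q : List E, a0 :: (q ++ [a0]) = swWord seq 0 (q.length + 2) →
      seq (q.length + 1) = a0 := by
    intro q hq
    have h1 : (a0 :: (q ++ [a0]))[q.length + 1]? = some a0 := by
      rw [show a0 :: (q ++ [a0]) = (a0 :: q) ++ [a0] from rfl]
      rw [List.getElem?_append_right (by simp)]
      simp
    rw [hq] at h1
    have h2 : (swWord seq 0 (q.length + 2))[q.length + 1]? = some (seq (q.length + 1)) := by
      simp [swWord, List.getElem?_range, Nat.lt_succ_self]
    rw [h2] at h1
    exact Option.some.inj h1
  have hreturn : seq (p.length + 1) = a0 := hlastlem p hwcanon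
  -- minimal period d
  have hretex : ∃ n, 0 < n ∧ seq n = a0 := ⟨p.length + 1, by omega, hreturn⟩
  set d : ℕ := Nat.find hretex with hddef
  have hd0 : 0 < d := (Nat.find_spec hretex).1
  have hda : seq d = a0 := (Nat.find_spec hretex).2
  have hdmin : ∀ m, 0 < m → seq m = a0 → d ≤ m := by
    intro m hm1 hm2
    exact Nat.find_min' hretex ⟨hm1, hm2⟩
  have hper : ∀ n, seq (n + d) = seq n := by
    intro n
    have h : seq (n + d) = succ^[n] (seq d) := by
      simp only [hseqdef]
      rw [Function.iterate_add_apply]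
    rw [h, hda]
  have haddmul : ∀ m q, seq (m + d * q) = seq m := by
    intro m q
    induction q with
    | zero => simp
    | succ q ih => rw [Nat.mul_succ, ← add_assoc, hper, ih]
  have hmod : ∀ n, seq n = seq (n % d) := by
    intro n
    conv_lhs => rw [← Nat.mod_add_div n d]
    exact haddmul _ _
  have hdL : d ≤ p.length + 1 := hdmin _ (by omega) hreturn
  -- consecutive products are nonzero within the big word, hence everywhere
  have hgoodlem : ∀ n, n + 2 ≤ p.length + 2 →
      ar (seq n) * ar (seq (n + 1)) ≠ 0 := by
    intro n hn h0
    apply hLw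
    have hdecomp : swWord seq 0 (p.length + 2) =
        swWord seq 0 n ++ (swWord seq (0 + n) 2 ++ swWord seq (0 + n + 2) (p.length + 2 - n - 2)) := by
      rw [← swWord_append, ← swWord_append]
      congr 1
      omega
    rw [hdecomp, pw_append, pw_append]
    have h2 : ((swWord seq (0 + n) 2).map ar).prod = ar (seq n) * ar (seq (n + 1)) := by
      rw [swWord_two, pw_cons, pw_single]
      simp
    rw [h2, h0, zero_mul, mul_zero]
  have hgoodall : ∀ n, ar (seq n) * ar (seq (n + 1)) ≠ 0 := by
    intro n
    have hm : n % d < d := Nat.mod_lt _ hd0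
    have h1 : seq n = seq (n % d) := hmod n
    have h2 : seq (n + 1) = seq (n % d + 1) := by
      conv_lhs => rw [show n + 1 = (n % d + 1) + d * (n / d) by
        conv_lhs => rw [← Nat.mod_add_div n d]
        ring]
      exact haddmul _ _
    rw [h1, h2]
    exact hgoodlem (n % d) (by omega)
  -- return times are multiples of d
  have hdvd : ∀ n, seq n = a0 → d ∣ n := by
    intro n
    induction n using Nat.strong_induction_on with
    | _ n ih =>
      intro hn
      rcases Nat.lt_or_ge n d with h | h
      · rcases Nat.eq_zero_or_pos n with rfl | hn0
        · exact dvd_zero d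
        · exact absurd (hdmin n hn0 hn) (by omega)
      · have h2 : seq (n - d) = a0 := by
          have h3 := hper (n - d)
          rw [Nat.sub_add_cancel h] at h3
          rw [← h3]; exact hn
        have h4 : d ∣ n - d := ih (n - d) (by omega) h2
        have h5 : d ∣ (n - d) + d := dvd_add h4 dvd_rfl
        rwa [Nat.sub_add_cancel h] at h5
  -- injectivity of seq on [0, d)
  have hinj : ∀ i j, i < d → j < d → seq i = seq j → i = j := by
    have aux : ∀ i j, i ≤ j → j < d → seq i = seq j → i = j := by
      intro i j hij hjd h
      by_contra hne
      have hlt : i < j := lt_of_le_of_ne hij hne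
      have h1 : seq (d + (j - i)) = a0 := by
        have e1 : d + (j - i) = j + (d - i) := by omega
        have e2 : seq (j + (d - i)) = seq (i + (d - i)) := (hdet i j h (d - i)).symm
        rw [e1, e2, show i + (d - i) = d by omega, hda]
      have h6 := hdvd _ h1
      have h7 : d ∣ j - i := (Nat.dvd_add_right (dvd_refl d)).mp h6
      have h8 : d ≤ j - i := Nat.le_of_dvd (by omega) h7
      omega
    intro i j hi hj h
    rcases le_total i j with hle | hle
    · exact aux i j hle hj h
    · exact (aux j i hle hi h.symm).symm
  -- unique predecessor
  have hpred : ∀ (i : ℕ) (β : E), ar β * ar (seq i) ≠ 0 → β = seq (i + d - 1) := by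
    intro i β h
    by_contra hne
    have hg : ar (seq (i + d - 1)) * ar (seq i) ≠ 0 := by
      have hgg := hgoodall (i + d - 1)
      rw [show i + d - 1 + 1 = i + d by omega, hper i] at hgg
      exact hgg
    rcases hstr1 (seq i) β (seq (i + d - 1)) hne (hts _ _ h) (hts _ _ hg) with h0 | h0
    · exact h h0
    · exact hg h0
  -- multiplication killers
  have hK1 : ∀ (i n : ℕ) (β : E), β ≠ seq (i + n + 1) →
      ((swWord seq i (n + 1)).map ar).prod * ar β = 0 := by
    intro i n β hβ
    rw [swWord_snoc, pw_append, pw_single, mul_assoc]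
    have h0 : ar (seq (i + n)) * ar β = 0 := by
      by_contra h
      exact hβ (hsuccu _ _ h)
    rw [h0, mul_zero]
  have hK2 : ∀ (i n : ℕ) (β : E), β ≠ seq (i + d - 1) →
      ar β * ((swWord seq i (n + 1)).map ar).prod = 0 := by
    intro i n β hβ
    rw [swWord_cons, pw_cons, ← mul_assoc]
    have h0 : ar β * ar (seq i) = 0 := by
      by_contra h
      exact hβ (hpred i β h)
    rw [h0, zero_mul]
  -- snoc/cons identity
  have hsnoc_cons : ∀ i n : ℕ, ((swWord seq i n).map ar).prod * ar (seq (i + n))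
      = ar (seq i) * ((swWord seq (i + 1) n).map ar).prod := by
    intro i n
    rw [← pw_single, ← pw_append, ← swWord_snoc, swWord_cons, pw_cons]
  have hrotper : ∀ i n : ℕ, swWord seq (i + d) n = swWord seq i n := by
    intro i n
    apply swWord_congr
    intro m
    rw [show i + d + m = (i + m) + d by omega, hper]
  -- the central element
  set z : A := ∑ i ∈ Finset.range d, ((swWord seq i d).map ar).prod with hz
  have hshift : ∀ g : ℕ → A, g d = g 0 →
      (∑ i ∈ Finset.range d, g (i + 1)) = ∑ i ∈ Finset.range d, g i := by
    intro g hg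
    have h1 : (∑ i ∈ Finset.range d, g (i + 1)) + g 0 = ∑ i ∈ Finset.range (d + 1), g i :=
      (Finset.sum_range_succ' g d).symm
    have h2 : (∑ i ∈ Finset.range (d + 1), g i) = (∑ i ∈ Finset.range d, g i) + g d :=
      Finset.sum_range_succ g d
    have h3 := h1.trans h2
    rw [hg] at h3
    exact add_right_cancel h3
  have hsw_d0 : swWord seq d d = swWord seq 0 d := by
    have := hrotper 0 d
    simpa using this
  -- centrality on arrows
  have hzar : ∀ β : E, z * ar β = ar β * z := by
    intro β
    have hterm : ∀ i : ℕ, ((swWord seq i d).map ar).prod * ar β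
        = ar β * ((swWord seq (i + 1) d).map ar).prod := by
      intro i
      by_cases hβ : β = seq i
      · subst hβ
        conv_lhs => rw [← hper i]
        exact hsnoc_cons i d
      · obtain ⟨m, hm⟩ : ∃ m, d = m + 1 := ⟨d - 1, by omega⟩
        have l0 : ((swWord seq i d).map ar).prod * ar β = 0 := by
          rw [hm]
          apply hK1 i m β
          rw [show i + m + 1 = i + d by omega, hper i]
          exact hβ
        have r0 : ar β * ((swWord seq (i + 1) d).map ar).prod = 0 := by
          rw [hm]
          apply hK2 (i + 1) m β
          rw [show i + 1 + d - 1 = i + d by omega, hper i]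
          exact hβ
        rw [l0, r0]
    calc z * ar β = ∑ i ∈ Finset.range d, ((swWord seq i d).map ar).prod * ar β := by
          rw [hz, Finset.sum_mul]
      _ = ∑ i ∈ Finset.range d, ar β * ((swWord seq (i + 1) d).map ar).prod :=
          Finset.sum_congr rfl (fun i _ => hterm i)
      _ = ∑ i ∈ Finset.range d, ar β * ((swWord seq i d).map ar).prod := by
          apply hshift (fun i => ar β * ((swWord seq i d).map ar).prod)
          rw [hsw_d0]
      _ = ar β * z := by rw [hz, Finset.mul_sum]
  -- centrality on idempotents
  have hze : ∀ v : V, z * e v = e v * z := by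
    intro v
    have hterm : ∀ i : ℕ, ((swWord seq i d).map ar).prod * e v
        = e v * ((swWord seq i d).map ar).prod := by
      intro i
      obtain ⟨m, hm⟩ : ∃ m, d = m + 1 := ⟨d - 1, by omega⟩
      have hts' : t (seq (i + m)) = s (seq i) := by
        have h1 := hts _ _ (hgoodall (i + m))
        rw [show i + m + 1 = i + d by omega, hper i] at h1
        exact h1
      have hLf : ((swWord seq i (m + 1)).map ar).prod * e v
          = if t (seq (i + m)) = v then ((swWord seq i (m + 1)).map ar).prod else 0 := by
        conv_lhs => rw [swWord_snoc, pw_append, pw_single, mul_assoc, mul_e]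
        by_cases h : t (seq (i + m)) = v
        · rw [if_pos h, if_pos h, swWord_snoc, pw_append, pw_single]
        · rw [if_neg h, if_neg h, mul_zero]
      have hRf : e v * ((swWord seq i (m + 1)).map ar).prod
          = if v = s (seq i) then ((swWord seq i (m + 1)).map ar).prod else 0 := by
        conv_lhs => rw [swWord_cons, pw_cons, ← mul_assoc, e_mul]
        by_cases h : v = s (seq i)
        · rw [if_pos h, if_pos h, swWord_cons, pw_cons]
        · rw [if_neg h, if_neg h, zero_mul]
      rw [hm, hLf, hRf]
      by_cases h : v = s (seq i)
      · rw [if_pos h, if_pos (hts'.trans h.symm)]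
      · rw [if_neg h, if_neg (fun hh => h (hh.symm.trans hts'))]
    calc z * e v = ∑ i ∈ Finset.range d, ((swWord seq i d).map ar).prod * e v := by
          rw [hz, Finset.sum_mul]
      _ = ∑ i ∈ Finset.range d, e v * ((swWord seq i d).map ar).prod :=
          Finset.sum_congr rfl (fun i _ => hterm i)
      _ = e v * z := by rw [hz, Finset.mul_sum]
  -- centrality on path products
  have hzl : ∀ l : List E, z * (l.map ar).prod = (l.map ar).prod * z := by
    intro l
    induction l with
    | nil => simp
    | cons β l ih =>
      rw [pw_cons, ← mul_assoc, hzar β, mul_assoc, ih, ← mul_assoc]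
  -- full centrality
  have hcen : ∀ x : A, z * x = x * z := by
    have hC : Submodule.span k (Set.range
        (Sum.elim e (fun l : {l : List E // l ≠ []} => (l.1.map ar).prod))) ≤
        ({ carrier := {x : A | z * x = x * z}
           add_mem' := by
             intro a b ha hb
             simp only [Set.mem_setOf_eq] at *
             rw [mul_add, add_mul, ha, hb]
           zero_mem' := by simp
           smul_mem' := by
             intro c x hx
             simp only [Set.mem_setOf_eq] at *
             rw [mul_smul_comm, smul_mul_assoc, hx] } : Submodule k A) := by
      apply Submodule.span_le.mpr
      rintro g ⟨i, rfl⟩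
      cases i with
      | inl v => exact hze v
      | inr l => exact hzl l.1
    intro x
    have hx1 : x ∈ Submodule.span k (Set.range
        (Sum.elim e (fun l : {l : List E // l ≠ []} => (l.1.map ar).prod))) := by
      rw [hspan]; trivial
    exact hC hx1
  -- powers of z
  have hzpow : ∀ j : ℕ, 1 ≤ j →
      z ^ j = ∑ i ∈ Finset.range d, ((swWord seq i (j * d)).map ar).prod := by
    intro j hj
    induction j with
    | zero => omega
    | succ j ih =>
      rcases Nat.eq_zero_or_pos j with rfl | hj0
      · rw [pow_one, hz]
        simp
      · rw [pow_succ, ih hj0, Finset.sum_mul]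
        apply Finset.sum_congr rfl
        intro i hi
        have hid : i < d := Finset.mem_range.mp hi
        have hjd : 1 ≤ j * d := Nat.mul_pos hj0 hd0
        obtain ⟨m, hm⟩ : ∃ m, j * d = m + 1 := ⟨j * d - 1, by omega⟩
        have hterm : ((swWord seq i (j * d)).map ar).prod * z
            = ((swWord seq i (j * d)).map ar).prod * ((swWord seq i d).map ar).prod := by
          rw [hz, Finset.mul_sum]
          apply Finset.sum_eq_single i
          · intro i' hi' hne
            have hid' : i' < d := Finset.mem_range.mp hi'
            obtain ⟨m', hm'⟩ : ∃ m', d = m' + 1 := ⟨d - 1, by omega⟩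
            have h0 : ((swWord seq i (j * d)).map ar).prod * ar (seq i') = 0 := by
              rw [hm]
              apply hK1 i m (seq i')
              rw [show i + m + 1 = i + j * d by omega, show i + j * d = i + d * j by ring,
                haddmul]
              intro hcontra
              exact hne (hinj i' i hid' hid hcontra)
            rw [show swWord seq i' d = seq i' :: swWord seq (i' + 1) m' by
              rw [hm', swWord_cons]]
            rw [pw_cons, ← mul_assoc, h0, zero_mul]
          · intro hni
            exact absurd hi hni
        rw [hterm]
        have hswi : swWord seq i d = swWord seq (i + j * d) d := by
          apply swWord_congr
          intro m'
          rw [show i + j * d + m' = (i + m') + d * j by ring, haddmul]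
        rw [hswi, ← pw_append, ← swWord_append]
        congr 2
        ring
  -- α · z^j is the long word
  have hazj : ∀ j : ℕ, 1 ≤ j →
      ar a0 * z ^ j = ((swWord seq 0 (j * d + 1)).map ar).prod := by
    intro j hj
    have hjd : 1 ≤ j * d := Nat.mul_pos hj hd0
    rw [hzpow j hj, Finset.mul_sum]
    have h1d : 1 % d < d := Nat.mod_lt _ hd0
    have hseq1 : seq (1 % d) = seq 1 := (hmod 1).symm
    have hsum1 : (∑ i ∈ Finset.range d, ar a0 * ((swWord seq i (j * d)).map ar).prod)
        = ar a0 * ((swWord seq (1 % d) (j * d)).map ar).prod := by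
      apply Finset.sum_eq_single (1 % d)
      · intro i' hi' hne
        have hid' : i' < d := Finset.mem_range.mp hi'
        obtain ⟨m, hm⟩ : ∃ m, j * d = m + 1 := ⟨j * d - 1, by omega⟩
        rw [show swWord seq i' (j * d) = seq i' :: swWord seq (i' + 1) m by
          rw [hm, swWord_cons]]
        rw [pw_cons, ← mul_assoc]
        have h0 : ar a0 * ar (seq i') = 0 := by
          by_contra h
          have h1 : seq i' = seq 1 := by
            have h2 := hsuccu 0 (seq i') (by rw [ha0]; exact h)
            simpa using h2
          exact hne (hinj i' (1 % d) hid' h1d (h1.trans hseq1.symm))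
        rw [h0, zero_mul]
      · intro hni
        exact absurd (Finset.mem_range.mpr h1d) hni
    rw [hsum1]
    have hsw1 : swWord seq (1 % d) (j * d) = swWord seq 1 (j * d) := by
      apply swWord_congr
      exact hdet (1 % d) 1 hseq1
    have e0 : ((swWord seq 0 1).map ar).prod = ar a0 := by
      rw [swWord_one, pw_single, ha0]
    rw [hsw1, show j * d + 1 = 1 + j * d by ring, swWord_append seq 0 1 (j * d),
      pw_append, e0]
  -- seq (j*d) = a0
  have hseqjd : ∀ j : ℕ, seq (j * d) = a0 := by
    intro j
    have := haddmul 0 j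
    rw [show (0:ℕ) + d * j = j * d by ring] at this
    rw [this, ha0]
  -- the long word is of the form α · x · α
  have hform : ∀ j : ℕ, 1 ≤ j →
      ((swWord seq 0 (j * d + 1)).map ar).prod
        = ar a0 * ((swWord seq 1 (j * d - 1)).map ar).prod * ar a0 := by
    intro j hj
    have hjd : 1 ≤ j * d := Nat.mul_pos hj hd0
    have e1 : j * d + 1 = 1 + ((j * d - 1) + 1) := by omega
    have e0 : ((swWord seq 0 1).map ar).prod = ar a0 := by
      rw [swWord_one, pw_single, ha0]
    rw [e1, swWord_append seq 0 1 _, pw_append, e0]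
    rw [swWord_snoc, pw_append, pw_single]
    rw [show (0:ℕ) + 1 = 1 by rfl]
    rw [show (1:ℕ) + (j * d - 1) = j * d by omega, hseqjd j, ← mul_assoc]
  -- degree membership
  have hdeg : z ∈ Submodule.span k
      {y : A | ∃ l : List E, l.length = d ∧ y = (l.map ar).prod} := by
    rw [hz]
    apply Submodule.sum_mem
    intro i _
    exact Submodule.subset_span ⟨swWord seq i d, swWord_length seq i d, rfl⟩
  -- span equality
  have hspaneq : Submodule.span k {y : A | ∃ j : ℕ, 0 < j ∧ y = ar a0 * z ^ j} =
      Submodule.span k {y : A | ∃ x : A, y = ar a0 * x * ar a0} := by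
    apply le_antisymm
    · apply Submodule.span_le.mpr
      rintro y ⟨j, hj, rfl⟩
      apply Submodule.subset_span
      refine ⟨((swWord seq 1 (j * d - 1)).map ar).prod, ?_⟩
      rw [hazj j hj, hform j hj]
    · apply Submodule.span_le.mpr
      rintro y ⟨x, rfl⟩
      set S : Submodule k A :=
        Submodule.span k {y : A | ∃ j : ℕ, 0 < j ∧ y = ar a0 * z ^ j} with hS
      show ar a0 * x * ar a0 ∈ S
      have hD : Submodule.span k (Set.range
          (Sum.elim e (fun l : {l : List E // l ≠ []} => (l.1.map ar).prod))) ≤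
          ({ carrier := {x : A | ar a0 * x * ar a0 ∈ S}
             add_mem' := by
               intro a b ha hb
               simp only [Set.mem_setOf_eq] at *
               rw [mul_add, add_mul]
               exact Submodule.add_mem _ ha hb
             zero_mem' := by
               simp only [Set.mem_setOf_eq, mul_zero, zero_mul]
               exact Submodule.zero_mem _
             smul_mem' := by
               intro c x hx
               simp only [Set.mem_setOf_eq] at *
               rw [mul_smul_comm, smul_mul_assoc]
               exact Submodule.smul_mem _ _ hx } : Submodule k A) := by
        apply Submodule.span_le.mpr
        rintro g ⟨i, rfl⟩
        cases i with
        | inl v =>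
          show ar a0 * (Sum.elim e _ (Sum.inl v)) * ar a0 ∈ S
          simp only [Sum.elim_inl]
          rw [mul_e]
          by_cases hv : t a0 = v
          · rw [if_pos hv]
            by_cases h0 : ar a0 * ar a0 = 0
            · rw [h0]; exact Submodule.zero_mem _
            · have h1 : a0 = seq 1 := by
                have h2 := hsuccu 0 a0 (by rw [ha0]; exact h0)
                simpa using h2
              have hd1 : d = 1 := Nat.dvd_one.mp (hdvd 1 h1.symm)
              have h3 : ar a0 * z ^ 1 = ar a0 * ar a0 := by
                rw [hazj 1 le_rfl, hd1, show 1 * 1 + 1 = 2 from rfl, swWord_two,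
                  pw_cons, pw_single, ha0, ← h1]
              rw [← h3]
              exact Submodule.subset_span ⟨1, one_pos, rfl⟩
          · rw [if_neg hv, zero_mul]
            exact Submodule.zero_mem _
        | inr l =>
          show ar a0 * (Sum.elim e _ (Sum.inr l)) * ar a0 ∈ S
          simp only [Sum.elim_inr]
          by_cases h0 : ar a0 * (l.1.map ar).prod * ar a0 = 0
          · rw [h0]; exact Submodule.zero_mem _
          · have hprod : ((a0 :: (l.1 ++ [a0])).map ar).prod
                = ar a0 * (l.1.map ar).prod * ar a0 := by
              rw [pw_cons, pw_append, pw_single, ← mul_assoc]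
            have hne : ((seq 0 :: (l.1 ++ [a0])).map ar).prod ≠ 0 := by
              rw [ha0, hprod]; exact h0
            have hcan := canon (l.1 ++ [a0]) 0 hne
            rw [ha0] at hcan
            have hlen : (l.1 ++ [a0]).length + 1 = l.1.length + 2 := by simp
            rw [hlen] at hcan
            have hret2 : seq (l.1.length + 1) = a0 := hlastlem l.1 hcan
            obtain ⟨j, hjv⟩ := hdvd _ hret2
            have hj1 : 1 ≤ j := by
              rcases Nat.eq_zero_or_pos j with rfl | h
              · omega
              · exact h
            have hy : ar a0 * (l.1.map ar).prod * ar a0 = ar a0 * z ^ j := by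
              rw [mul_comm d j] at hjv
              rw [← hprod, hcan, show (l.1).length + 2 = j * d + 1 by omega,
                hazj j hj1]
            rw [hy]
            exact Submodule.subset_span ⟨j, hj1, rfl⟩
      have hx1 : x ∈ Submodule.span k (Set.range
          (Sum.elim e (fun l : {l : List E // l ≠ []} => (l.1.map ar).prod))) := by
        rw [hspan]; trivial
      exact hD hx1
  exact ⟨z, d, hd0, hcen, hdeg, hspaneq⟩
end
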